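/- Along the compressive branch, for every ρ ∈ (ρ_r, η ρ_r) the following two strict inequalities hold (primes denoting d/dρ): γ p(ρ) u'(ρ) − (s(ρ) − u(ρ)) p'(ρ) > 0 and c(ρ)² p'(ρ) − γ (s(ρ) − u(ρ)) p(ρ) u'(ρ) > 0. -/

import Mathlib

lemma auxB (η ρr ρ : ℝ) (hη1 : 1 < η) (hρr : 0 < ρr) (h1 : ρr < ρ) (h2 : ρ < η * ρr) :
    0 < (η - 2) * ρ + ρr := by
  rcases le_or_gt 2 η with h | h
  · nlinarith [mul_nonneg (by linarith : (0:ℝ) ≤ η - 2) (by linarith : (0:ℝ) ≤ ρ)]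
  · nlinarith [mul_lt_mul_of_neg_left h2 (by linarith : η - 2 < 0),
      mul_nonneg hρr.le (sq_nonneg (η - 1))]

lemma aux1 (γ η ρr ρ : ℝ) (hγη : γ * (η - 1) = η + 1) (hη1 : 1 < η) (hρr : 0 < ρr)
    (h1 : ρr < ρ) (h2 : ρ < η * ρr) :
    0 < γ * (η * ρ - ρr) * (η * ρ + η * ρr - 2 * ρ) - 2 * ρ * ρr * (η ^ 2 - 1) := by
  have hB := auxB η ρr ρ hη1 hρr h1 h2
  have hfac : (η - 1) * (γ * (η * ρ - ρr) * (η * ρ + η * ρr - 2 * ρ) - 2 * ρ * ρr * (η ^ 2 - 1))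
      = (η + 1) * (η * ((ρ - ρr) * ((η - 2) * ρ + ρr))) := by
    linear_combination ((η * ρ - ρr) * (η * ρ + η * ρr - 2 * ρ)) * hγη
  nlinarith [hfac, mul_pos (mul_pos (by linarith : (0:ℝ) < η + 1) (by linarith : (0:ℝ) < η))
    (mul_pos (by linarith : (0:ℝ) < ρ - ρr) hB)]

lemma aux2 (γ η ρr ρ : ℝ) (hγη : γ * (η - 1) = η + 1) (hη1 : 1 < η) (hρr : 0 < ρr)
    (h1 : ρr < ρ) (h2 : ρ < η * ρr) :
    0 < (γ - 1) * ρ * (η ^ 2 - 1) - γ * (η * ρ + η * ρr - 2 * ρ) := by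
  have hfac : (η - 1) * ((γ - 1) * ρ * (η ^ 2 - 1) - γ * (η * ρ + η * ρr - 2 * ρ))
      = (η + 1) * (η * (ρ - ρr)) := by
    linear_combination (ρ * (η ^ 2 - 1) - (η * ρ + η * ρr - 2 * ρ)) * hγη
  nlinarith [hfac, mul_pos (mul_pos (by linarith : (0:ℝ) < η + 1) (by linarith : (0:ℝ) < η))
    (by linarith : (0:ℝ) < ρ - ρr)]

/-- Along the compressive branch: `γ p u' − (s − u) p' > 0` and
`c² p' − γ (s − u) p u' > 0`. -/
theorem stmt11 (γ ρr ur pr η cr : ℝ)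
    (hγ : 1 < γ) (hρr : 0 < ρr) (hpr : 0 < pr)
    (hη : η = (γ + 1) / (γ - 1))
    (hcr : cr = Real.sqrt (γ * pr / ρr))
    (p u c s : ℝ → ℝ)
    (hp : ∀ ρ, p ρ = pr * (η * ρ - ρr) / (η * ρr - ρ))
    (hu : ∀ ρ, u ρ = ur + cr * Real.sqrt (2 / (γ - 1)) * (ρ - ρr)
        / Real.sqrt ((η * ρr - ρ) * ρ))
    (hc : ∀ ρ, c ρ = Real.sqrt (γ * p ρ / ρ))
    (hs : ∀ ρ, s ρ = (ρ * u ρ - ρr * ur) / (ρ - ρr)) :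
    ∀ ρ ∈ Set.Ioo ρr (η * ρr),
      0 < γ * p ρ * deriv u ρ - (s ρ - u ρ) * deriv p ρ
      ∧ 0 < (c ρ) ^ 2 * deriv p ρ - γ * (s ρ - u ρ) * p ρ * deriv u ρ := by
  intro ρ hρ
  obtain ⟨h1, h2⟩ := hρ
  have hγ1 : (0:ℝ) < γ - 1 := by linarith
  have hη1 : 1 < η := by
    rw [hη, lt_div_iff₀ hγ1]; linarith
  have hγη : γ * (η - 1) = η + 1 := by
    have h' : η * (γ - 1) = γ + 1 := by rw [hη]; field_simp
    linear_combination h'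
  have hρ0 : 0 < ρ := lt_trans hρr h1
  have hA : 0 < η * ρr - ρ := by linarith
  have hηρ : 0 < η * ρ - ρr := by nlinarith
  have hg : 0 < (η * ρr - ρ) * ρ := mul_pos hA hρ0
  obtain ⟨S, hSdef⟩ : ∃ x, x = Real.sqrt ((η * ρr - ρ) * ρ) := ⟨_, rfl⟩
  have hS : 0 < S := hSdef ▸ Real.sqrt_pos.2 hg
  have hS2 : S ^ 2 = (η * ρr - ρ) * ρ := hSdef ▸ Real.sq_sqrt hg.le
  obtain ⟨K, hKdef⟩ : ∃ x, x = cr * Real.sqrt (2 / (γ - 1)) := ⟨_, rfl⟩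
  have hcr0 : 0 < cr := by
    rw [hcr]; exact Real.sqrt_pos.2 (by positivity)
  have hK : 0 < K := hKdef ▸ mul_pos hcr0 (Real.sqrt_pos.2 (by positivity))
  have hK2 : K ^ 2 = γ * pr / ρr * (2 / (γ - 1)) := by
    rw [hKdef, mul_pow, hcr, Real.sq_sqrt (by positivity), Real.sq_sqrt (by positivity)]
  -- derivative of p
  have hpe : p = fun x => pr * (η * x - ρr) / (η * ρr - x) := funext hp
  have hdp : deriv p ρ = pr * ρr * (η ^ 2 - 1) / (η * ρr - ρ) ^ 2 := by
    have hn : HasDerivAt (fun x => pr * (η * x - ρr)) (pr * η) ρ := by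
      simpa using (((hasDerivAt_id ρ).const_mul η).sub_const ρr).const_mul pr
    have hd : HasDerivAt (fun x => η * ρr - x) (-1) ρ := by
      simpa using (hasDerivAt_id ρ).const_sub (η * ρr)
    have : HasDerivAt (fun x => pr * (η * x - ρr) / (η * ρr - x)) _ ρ := hn.div hd hA.ne'
    rw [hpe, this.deriv]
    field_simp
    ring
  -- derivative of u
  have hue : u = fun x => ur + K * ((x - ρr) / Real.sqrt ((η * ρr - x) * x)) := by
    funext x; rw [hu x, hKdef]; ring
  have hdu : deriv u ρ = K * ρr * (η * ρ + η * ρr - 2 * ρ) / (2 * S * ((η * ρr - ρ) * ρ)) := by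
    have hgd : HasDerivAt (fun x => (η * ρr - x) * x) (η * ρr - 2 * ρ) ρ := by
      have := ((hasDerivAt_id ρ).const_sub (η * ρr)).mul (hasDerivAt_id ρ)
      simp only [id] at this
      exact this.congr_deriv (by ring)
    have hsq : HasDerivAt (fun x => Real.sqrt ((η * ρr - x) * x))
        ((η * ρr - 2 * ρ) / (2 * S)) ρ := by
      rw [hSdef]
      exact hgd.sqrt hg.ne'
    have hnum : HasDerivAt (fun x => x - ρr) 1 ρ := (hasDerivAt_id ρ).sub_const ρr
    have hSne : Real.sqrt ((η * ρr - ρ) * ρ) ≠ 0 := by rw [← hSdef]; exact hS.ne'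
    have hq : HasDerivAt (fun x => (x - ρr) / Real.sqrt ((η * ρr - x) * x)) _ ρ :=
      hnum.div hsq hSne
    have hdu' := (hq.const_mul K).const_add ur
    rw [hue, hdu'.deriv, ← hSdef]
    have hS0 : S ≠ 0 := hS.ne'
    field_simp
    rw [hS2, eq_div_iff (ne_of_gt (by linarith))]; ring
  -- s - u
  have hsu : s ρ - u ρ = ρr * K / S := by
    rw [hs, hu, ← hSdef, hKdef]
    have hρρr : ρ - ρr ≠ 0 := sub_ne_zero.2 h1.ne'
    field_simp
    ring
  have hpρ : p ρ = pr * (η * ρ - ρr) / (η * ρr - ρ) := hp ρ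
  have hpρ0 : 0 < p ρ := by
    rw [hpρ]; exact div_pos (mul_pos hpr hηρ) hA
  have hc2 : c ρ ^ 2 = γ * p ρ / ρ := by
    rw [hc]; exact Real.sq_sqrt (by positivity)
  constructor
  · rw [hpρ, hdu, hsu, hdp]
    have key : γ * (pr * (η * ρ - ρr) / (η * ρr - ρ)) *
        (K * ρr * (η * ρ + η * ρr - 2 * ρ) / (2 * S * ((η * ρr - ρ) * ρ))) -
        ρr * K / S * (pr * ρr * (η ^ 2 - 1) / (η * ρr - ρ) ^ 2)
        = K * ρr * pr / (2 * S * (η * ρr - ρ) ^ 2 * ρ) *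
          (γ * (η * ρ - ρr) * (η * ρ + η * ρr - 2 * ρ) - 2 * ρ * ρr * (η ^ 2 - 1)) := by
      field_simp
    rw [key]
    exact mul_pos (div_pos (mul_pos (mul_pos hK hρr) hpr)
      (mul_pos (mul_pos (mul_pos two_pos hS) (pow_pos hA 2)) hρ0))
      (aux1 γ η ρr ρ hγη hη1 hρr h1 h2)
  · rw [hc2, hpρ, hdp, hsu, hdu]
    have hT2 : γ * (ρr * K / S) * (pr * (η * ρ - ρr) / (η * ρr - ρ)) *
        (K * ρr * (η * ρ + η * ρr - 2 * ρ) / (2 * S * ((η * ρr - ρ) * ρ)))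
        = γ * K ^ 2 * ρr ^ 2 * pr * (η * ρ - ρr) * (η * ρ + η * ρr - 2 * ρ) /
          (2 * (η * ρr - ρ) ^ 3 * ρ ^ 2) := by
      have hS0 : S ≠ 0 := hS.ne'
      field_simp
      rw [hS2, div_eq_div_iff (pow_ne_zero _ (ne_of_gt (by linarith)))
        (pow_ne_zero _ (ne_of_gt (by linarith)))]; ring
    rw [hT2]
    have hQ2 : 0 < 2 * ρ * pr * (η ^ 2 - 1) - K ^ 2 * ρr * (η * ρ + η * ρr - 2 * ρ) := by
      have h' : 2 * ρ * pr * (η ^ 2 - 1) - K ^ 2 * ρr * (η * ρ + η * ρr - 2 * ρ)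
          = 2 * pr / (γ - 1) * ((γ - 1) * ρ * (η ^ 2 - 1) - γ * (η * ρ + η * ρr - 2 * ρ)) := by
        rw [hK2]; field_simp
      rw [h']
      exact mul_pos (div_pos (by linarith) hγ1) (aux2 γ η ρr ρ hγη hη1 hρr h1 h2)
    have key : γ * (pr * (η * ρ - ρr) / (η * ρr - ρ)) / ρ *
        (pr * ρr * (η ^ 2 - 1) / (η * ρr - ρ) ^ 2) -
        γ * K ^ 2 * ρr ^ 2 * pr * (η * ρ - ρr) * (η * ρ + η * ρr - 2 * ρ) /
          (2 * (η * ρr - ρ) ^ 3 * ρ ^ 2)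
        = γ * pr * (η * ρ - ρr) * ρr / (2 * (η * ρr - ρ) ^ 3 * ρ ^ 2) *
          (2 * ρ * pr * (η ^ 2 - 1) - K ^ 2 * ρr * (η * ρ + η * ρr - 2 * ρ)) := by
      field_simp
    rw [key]
    exact mul_pos (div_pos (mul_pos (mul_pos (mul_pos (by linarith : (0:ℝ) < γ) hpr) hηρ) hρr)
      (mul_pos (mul_pos two_pos (pow_pos hA 3)) (pow_pos hρ0 2))) hQ2
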